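/- The matrix (I_n - J_n)³ A_n (I_n - J_nᵀ)³ is zero outside its lower-right 3×3 corner, and that corner equals the matrix R = [[0,1,1],[1,-6,1],[1,1,0]]. -/
import Mathlib


open Matrix

/-- truncated quadratic table -/
def gq (n k l : ℕ) : ℝ := if k < n ∧ l < n then ((l : ℝ) - (k : ℝ)) ^ 2 else 0

/-- row difference -/
def Dc (f : ℕ → ℕ → ℝ) (k l : ℕ) : ℝ := f k l - f (k + 1) l

/-- column difference -/
def Ec (f : ℕ → ℕ → ℝ) (k l : ℕ) : ℝ := f k l - f k (l + 1)

lemma gq_z (n k l : ℕ) (h : n ≤ k ∨ n ≤ l) : gq n k l = 0 := by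
  unfold gq; rw [if_neg (by omega)]

lemma gq_pos (n k l : ℕ) (hk : k < n) (hl : l < n) :
    gq n k l = ((l : ℝ) - (k : ℝ)) ^ 2 := by
  unfold gq; rw [if_pos ⟨hk, hl⟩]

lemma rowz (n k l : ℕ) (hk : k + 3 < n) :
    Dc (Dc (Dc (Ec (Ec (Ec (gq n)))))) k l = 0 := by
  have h5 : l + 3 < n ∨ l + 3 = n ∨ l + 2 = n ∨ l + 1 = n ∨ n ≤ l := by omega
  rcases h5 with h | h | h | h | h <;>
  · simp (disch := omega) only [Dc, Ec, gq_pos, gq_z]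
    push_cast
    ring

lemma colz (n k l : ℕ) (hl : l + 3 < n) :
    Dc (Dc (Dc (Ec (Ec (Ec (gq n)))))) k l = 0 := by
  have h5 : k + 3 < n ∨ k + 3 = n ∨ k + 2 = n ∨ k + 1 = n ∨ n ≤ k := by omega
  rcases h5 with h | h | h | h | h <;>
  · simp (disch := omega) only [Dc, Ec, gq_pos, gq_z]
    push_cast
    ring

lemma fin3_two (h : (2:ℕ) < 3) : (⟨2, h⟩ : Fin 3) = 2 := rfl

lemma stepL {n : ℕ} (J : Matrix (Fin n) (Fin n) ℝ)
    (hJ : ∀ i j : Fin n, J i j = if i.val + 1 = j.val then 1 else 0)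
    (M : Matrix (Fin n) (Fin n) ℝ) (f : ℕ → ℕ → ℝ)
    (hf : ∀ k l, n ≤ k → f k l = 0)
    (hM : ∀ i j : Fin n, M i j = f i.val j.val) :
    ∀ i j : Fin n, ((1 - J) * M) i j = Dc f i.val j.val := by
  intro i j
  have hJM : (J * M) i j = f (i.val + 1) j.val := by
    rw [Matrix.mul_apply]
    by_cases h : i.val + 1 < n
    · rw [Finset.sum_eq_single (⟨i.val + 1, h⟩ : Fin n)]
      · rw [hJ, hM]; simp
      · intro k _ hk
        rw [hJ, if_neg, zero_mul]
        intro hc; exact hk (Fin.ext hc.symm)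
      · intro hmem; exact absurd (Finset.mem_univ _) hmem
    · rw [hf _ _ (by omega)]
      apply Finset.sum_eq_zero
      intro k _
      rw [hJ, if_neg, zero_mul]
      have := k.isLt; omega
  rw [Matrix.sub_mul, Matrix.one_mul, Matrix.sub_apply, hM, hJM]
  rfl

lemma stepR {n : ℕ} (J : Matrix (Fin n) (Fin n) ℝ)
    (hJ : ∀ i j : Fin n, J i j = if i.val + 1 = j.val then 1 else 0)
    (M : Matrix (Fin n) (Fin n) ℝ) (f : ℕ → ℕ → ℝ)
    (hf : ∀ k l, n ≤ l → f k l = 0)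
    (hM : ∀ i j : Fin n, M i j = f i.val j.val) :
    ∀ i j : Fin n, (M * (1 - J)ᵀ : Matrix (Fin n) (Fin n) ℝ) i j = Ec f i.val j.val := by
  intro i j
  have hJM : (M * Jᵀ) i j = f i.val (j.val + 1) := by
    rw [Matrix.mul_apply]
    simp only [Matrix.transpose_apply]
    by_cases h : j.val + 1 < n
    · rw [Finset.sum_eq_single (⟨j.val + 1, h⟩ : Fin n)]
      · rw [hJ, hM]; simp
      · intro k _ hk
        rw [hJ, if_neg, mul_zero]
        intro hc; exact hk (Fin.ext hc.symm)
      · intro hmem; exact absurd (Finset.mem_univ _) hmem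
    · rw [hf _ _ (by omega)]
      apply Finset.sum_eq_zero
      intro k _
      rw [hJ, if_neg, mul_zero]
      have := k.isLt; omega
  rw [Matrix.transpose_sub, Matrix.transpose_one, Matrix.mul_sub, Matrix.mul_one,
    Matrix.sub_apply, hM, hJM]
  rfl

theorem stmt_6 (n : ℕ) (hn : 3 ≤ n)
    (A : Matrix (Fin n) (Fin n) ℝ)
    (hA : ∀ i j : Fin n, A i j = ((j.val : ℝ) - (i.val : ℝ)) ^ 2)
    (J : Matrix (Fin n) (Fin n) ℝ)
    (hJ : ∀ i j : Fin n, J i j = if i.val + 1 = j.val then 1 else 0)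
    (R : Matrix (Fin 3) (Fin 3) ℝ)
    (hR : R = !![0, 1, 1; 1, -6, 1; 1, 1, 0])
    (B : Matrix (Fin n) (Fin n) ℝ)
    (hB : B = (1 - J) ^ 3 * A * ((1 - J)ᵀ) ^ 3) :
    (∀ i j : Fin n, (i.val < n - 3 ∨ j.val < n - 3) → B i j = 0) ∧
    (∀ a b : Fin 3,
      B ⟨n - 3 + a.val, by have := a.isLt; omega⟩
        ⟨n - 3 + b.val, by have := b.isLt; omega⟩ = R a b) := by
  have h0 : ∀ i j : Fin n, A i j = gq n i.val j.val := by
    intro i j; rw [hA, gq_pos n _ _ i.isLt j.isLt]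
  have hv1 : ∀ k l, n ≤ l → gq n k l = 0 := fun k l h => gq_z n k l (Or.inr h)
  have h1 := stepR J hJ A _ hv1 h0
  have hv2 : ∀ k l, n ≤ l → Ec (gq n) k l = 0 := by
    intro k l h; simp (disch := omega) only [Ec, gq_z]; ring
  have h2 := stepR J hJ _ _ hv2 h1
  have hv3 : ∀ k l, n ≤ l → Ec (Ec (gq n)) k l = 0 := by
    intro k l h; simp (disch := omega) only [Ec, gq_z]; ring
  have h3 := stepR J hJ _ _ hv3 h2
  have hv4 : ∀ k l, n ≤ k → Ec (Ec (Ec (gq n))) k l = 0 := by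
    intro k l h; simp (disch := omega) only [Ec, gq_z]; ring
  have h4 := stepL J hJ _ _ hv4 h3
  have hv5 : ∀ k l, n ≤ k → Dc (Ec (Ec (Ec (gq n)))) k l = 0 := by
    intro k l h; simp (disch := omega) only [Dc, Ec, gq_z]; ring
  have h5 := stepL J hJ _ _ hv5 h4
  have hv6 : ∀ k l, n ≤ k → Dc (Dc (Ec (Ec (Ec (gq n))))) k l = 0 := by
    intro k l h; simp (disch := omega) only [Dc, Ec, gq_z]; ring
  have h6 := stepL J hJ _ _ hv6 h5
  have hB' : B = (1 - J) * ((1 - J) * ((1 - J) *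
      (((A * (1 - J)ᵀ) * (1 - J)ᵀ) * (1 - J)ᵀ))) := by
    rw [hB, pow_succ, pow_succ, pow_one, pow_succ, pow_succ, pow_one]
    simp only [Matrix.mul_assoc]
  have keyB : ∀ i j : Fin n,
      B i j = Dc (Dc (Dc (Ec (Ec (Ec (gq n)))))) i.val j.val := by
    intro i j; rw [hB']; exact h6 i j
  constructor
  · intro i j h
    rw [keyB]
    rcases h with h | h
    · exact rowz n _ _ (by omega)
    · exact colz n _ _ (by omega)
  · intro a b
    rw [keyB]
    obtain ⟨a, ha⟩ := a
    obtain ⟨b, hb⟩ := b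
    simp only [Fin.val_mk]
    interval_cases a <;> interval_cases b <;>
    · simp (disch := omega) only [Dc, Ec, gq_pos, gq_z]
      rw [hR]
      norm_num [Matrix.vecHead, Matrix.vecTail, fin3_two]
      try push_cast
      try ring
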